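/- Let α > 0, r₀ > 0, and θ₀ ∈ (0, α). Then ∫₀^∞ (r/r₀)^{(π/α) − 1} · sin(πθ₀/α) / (sin²(πθ₀/α) + ((r/r₀)^{π/α} + cos(πθ₀/α))²) · (1/(α r₀)) dr = θ₀/α, where the integral converges as a Lebesgue integral on (0, ∞). -/

import Mathlib

open Real MeasureTheory

/-- The probability of a price decrease for a driftless correlated planar Brownian
motion, written as an exit-side density integral over a wedge of opening angle `α`
with initial polar coordinates `(r₀, θ₀)`, converges and equals `θ₀/α`. -/
theorem integral_price_decrease_probability
    (α r₀ θ₀ : ℝ) (hα : 0 < α) (hr₀ : 0 < r₀) (hθ₀ : 0 < θ₀) (hθ₀α : θ₀ < α) :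
    IntegrableOn
      (fun r : ℝ => (r / r₀) ^ (Real.pi / α - 1) * Real.sin (Real.pi * θ₀ / α) /
        ((Real.sin (Real.pi * θ₀ / α)) ^ 2 +
          ((r / r₀) ^ (Real.pi / α) + Real.cos (Real.pi * θ₀ / α)) ^ 2) *
        (1 / (α * r₀)))
      (Set.Ioi 0) volume ∧
    ∫ r in Set.Ioi (0 : ℝ),
      (r / r₀) ^ (Real.pi / α - 1) * Real.sin (Real.pi * θ₀ / α) /
        ((Real.sin (Real.pi * θ₀ / α)) ^ 2 +
          ((r / r₀) ^ (Real.pi / α) + Real.cos (Real.pi * θ₀ / α)) ^ 2) *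
        (1 / (α * r₀)) = θ₀ / α := by
  have hπ := Real.pi_pos
  set x : ℝ := Real.pi * θ₀ / α with hxdef
  have hx0 : 0 < x := by positivity
  have hxπ : x < Real.pi := by
    rw [hxdef, div_lt_iff₀ hα]
    nlinarith
  have hs : 0 < Real.sin x := Real.sin_pos_of_pos_of_lt_pi hx0 hxπ
  set s : ℝ := Real.sin x
  set c : ℝ := Real.cos x
  set p : ℝ := Real.pi / α with hpdef
  have hp : 0 < p := div_pos hπ hα
  set g : ℝ → ℝ := fun r : ℝ =>
      (r / r₀) ^ (p - 1) * s / (s ^ 2 + ((r / r₀) ^ p + c) ^ 2) * (1 / (α * r₀))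
    with hg
  set f : ℝ → ℝ := fun r : ℝ =>
      (1 / Real.pi) * Real.arctan (((r / r₀) ^ p + c) / s) with hf
  -- derivative
  have hderiv : ∀ r ∈ Set.Ioi (0:ℝ), HasDerivAt f (g r) r := by
    intro r hr
    have hr' : 0 < r := hr
    have h1 : HasDerivAt (fun t : ℝ => t / r₀) (1 / r₀) r := by
      simpa using (hasDerivAt_id r).div_const r₀
    have hne : r / r₀ ≠ 0 := by positivity
    have h2 : HasDerivAt (fun t : ℝ => (t / r₀) ^ p)
        ((p * (r / r₀) ^ (p - 1)) * (1 / r₀)) r :=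
      by have h := (Real.hasDerivAt_rpow_const (p := p) (Or.inl hne)).comp r h1; exact h
    have h3 : HasDerivAt (fun t : ℝ => ((t / r₀) ^ p + c) / s)
        (((p * (r / r₀) ^ (p - 1)) * (1 / r₀)) / s) r :=
      (h2.add_const c).div_const s
    have h4 := (Real.hasDerivAt_arctan (((r / r₀) ^ p + c) / s)).comp r h3
    have h5 := h4.const_mul (1 / Real.pi)
    refine h5.congr_deriv ?_
    have hden : (0:ℝ) < s ^ 2 + ((r / r₀) ^ p + c) ^ 2 := by positivity
    rw [hg, hpdef]
    field_simp
  -- nonnegativity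
  have hnonneg : ∀ r ∈ Set.Ioi (0:ℝ), 0 ≤ g r := by
    intro r hr
    have hr' : (0:ℝ) < r := hr
    have h1 : (0:ℝ) ≤ (r / r₀) ^ (p - 1) := Real.rpow_nonneg (by positivity) _
    have hden : (0:ℝ) < s ^ 2 + ((r / r₀) ^ p + c) ^ 2 := by positivity
    exact mul_nonneg (div_nonneg (mul_nonneg h1 hs.le) hden.le) (by positivity)
  -- continuity at 0
  have hcont : ContinuousWithinAt f (Set.Ici 0) 0 := by
    apply ContinuousAt.continuousWithinAt
    have h1 : ContinuousAt (fun t : ℝ => t / r₀) 0 := by fun_prop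
    have h2 : ContinuousAt (fun t : ℝ => (t / r₀) ^ p) 0 :=
      h1.rpow_const (Or.inr hp.le)
    have h3 : ContinuousAt (fun t : ℝ => Real.arctan (((t / r₀) ^ p + c) / s)) 0 :=
      Real.continuous_arctan.continuousAt.comp
        ((h2.add continuousAt_const).div_const s)
    exact h3.const_mul _
  -- limit at infinity
  have htop : Filter.Tendsto f Filter.atTop (nhds (1/2 : ℝ)) := by
    have h1 : Filter.Tendsto (fun t : ℝ => t / r₀) Filter.atTop Filter.atTop :=
      Filter.Tendsto.atTop_div_const hr₀ Filter.tendsto_id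
    have h2 : Filter.Tendsto (fun t : ℝ => (t / r₀) ^ p) Filter.atTop Filter.atTop :=
      (tendsto_rpow_atTop hp).comp h1
    have h3 : Filter.Tendsto (fun t : ℝ => ((t / r₀) ^ p + c) / s)
        Filter.atTop Filter.atTop :=
      Filter.Tendsto.atTop_div_const hs
        (Filter.tendsto_atTop_add_const_right _ c h2)
    have h4 : Filter.Tendsto (fun t : ℝ => Real.arctan (((t / r₀) ^ p + c) / s))
        Filter.atTop (nhds (Real.pi / 2)) :=
      (Real.tendsto_arctan_atTop.mono_right nhdsWithin_le_nhds).comp h3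
    have h5 := h4.const_mul (1 / Real.pi)
    have heq : (1 / Real.pi) * (Real.pi / 2) = (1/2 : ℝ) := by
      rw [div_mul_div_comm, one_mul]
      rw [← div_div, div_self hπ.ne']
    rw [hf, show (1/2 : ℝ) = (1 / Real.pi) * (Real.pi / 2) from heq.symm]
    exact h5
  -- value at 0
  have hf0 : f 0 = (1 / Real.pi) * (Real.pi / 2 - x) := by
    have h0 : ((0:ℝ) / r₀) ^ p = 0 := by
      rw [zero_div, Real.zero_rpow hp.ne']
    have hcs : c / s = Real.tan (Real.pi / 2 - x) := by
      rw [Real.tan_pi_div_two_sub, Real.tan_eq_sin_div_cos, inv_div]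
    have harc : Real.arctan (c / s) = Real.pi / 2 - x := by
      rw [hcs, Real.arctan_tan (by linarith) (by linarith)]
    rw [hf]
    simp only [h0, zero_add]
    rw [harc]
  have key := MeasureTheory.integral_Ioi_of_hasDerivAt_of_nonneg hcont hderiv hnonneg htop
  have keyInt := MeasureTheory.integrableOn_Ioi_deriv_of_nonneg hcont hderiv hnonneg htop
  constructor
  · exact keyInt
  · rw [key, hf0, hxdef]
    field_simp
    ring
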